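/- Let n ≥ 2, 1 ≤ k ≤ n, and let S₂ be a primitive non-powerful signed digraph whose underlying digraph is D₂ (the digraph on {1,...,n} with arcs (i,i+1) for 1 ≤ i ≤ n-1, (n,1), (n-1,1), and (n,2)). If the two cycles of length n-1 of S₂ have different signs, then L(S₂,k) ≤ (n-k+1)(n-1) + 2. -/

import Mathlib

/-- There is a walk of length `l` from `u` to `v` in the digraph with arc relation `A`. -/
def HasWalk {n : ℕ} (A : Fin n → Fin n → Prop) (u v : Fin n) (l : ℕ) : Prop :=
  ∃ f : ℕ → Fin n, f 0 = u ∧ f l = v ∧ ∀ i < l, A (f i) (f (i + 1))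

/-- A digraph is primitive if for some `p > 0` every ordered pair of vertices is
joined by a walk of length exactly `p`. -/
def Primitive {n : ℕ} (A : Fin n → Fin n → Prop) : Prop :=
  ∃ p, 0 < p ∧ ∀ u v : Fin n, HasWalk A u v p

/-- `f` is the vertex sequence of a walk of length `l` from `u` to `v` in `A`. -/
def IsWalkSeq {n : ℕ} (A : Fin n → Fin n → Prop) (f : ℕ → Fin n) (u v : Fin n) (l : ℕ) : Prop :=
  f 0 = u ∧ f l = v ∧ ∀ i < l, A (f i) (f (i + 1))

/-- The sign of (the length-`l` initial part of) the walk with vertex sequence `f`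
in the signed digraph `S`. -/
def walkSign {n : ℕ} (S : Fin n → Fin n → ℤ) (f : ℕ → Fin n) (l : ℕ) : ℤ :=
  ∏ i ∈ Finset.range l, S (f i) (f (i + 1))

/-- The underlying digraph of a signed digraph `S`. -/
def Underlying {n : ℕ} (S : Fin n → Fin n → ℤ) : Fin n → Fin n → Prop :=
  fun u v => S u v ≠ 0

/-- All entries of `S` are in `{0, 1, -1}`: `S` is a sign pattern / signed digraph. -/
def SignPattern {n : ℕ} (S : Fin n → Fin n → ℤ) : Prop :=
  ∀ u v, S u v = 0 ∨ S u v = 1 ∨ S u v = -1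

/-- There is a pair of SSSD walks of length `l` from `u` to `v`: two walks with the
same endpoints and length but different signs. -/
def HasSSSD {n : ℕ} (S : Fin n → Fin n → ℤ) (u v : Fin n) (l : ℕ) : Prop :=
  ∃ f g : ℕ → Fin n, IsWalkSeq (Underlying S) f u v l ∧ IsWalkSeq (Underlying S) g u v l ∧
    walkSign S f l ≠ walkSign S g l

/-- A signed digraph is non-powerful iff it contains a pair of SSSD walks. -/
def NonPowerful {n : ℕ} (S : Fin n → Fin n → ℤ) : Prop :=
  ∃ u v l, HasSSSD S u v l

/-- `exp_D(X)`: the least `p` such that every vertex is reachable from some vertex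
of `X` by a walk of length exactly `p`. -/
noncomputable def setExp {n : ℕ} (A : Fin n → Fin n → Prop) (X : Finset (Fin n)) : ℕ :=
  sInf {p | ∀ v, ∃ x ∈ X, HasWalk A x v p}

/-- `F(D,k)`: the `k`th upper multiexponent. -/
noncomputable def upperMultiexp {n : ℕ} (A : Fin n → Fin n → Prop) (k : ℕ) : ℕ :=
  sSup {e | ∃ X : Finset (Fin n), X.card = k ∧ setExp A X = e}

/-- `l_S(X)`: the least `p` such that every vertex admits a pair of SSSD walks of
length `p` from some vertex of `X`. -/
noncomputable def setBase {n : ℕ} (S : Fin n → Fin n → ℤ) (X : Finset (Fin n)) : ℕ :=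
  sInf {p | ∀ v, ∃ x ∈ X, HasSSSD S x v p}

/-- `L(S,k)`: the `k`th upper base. -/
noncomputable def upperBase {n : ℕ} (S : Fin n → Fin n → ℤ) (k : ℕ) : ℕ :=
  sSup {e | ∃ X : Finset (Fin n), X.card = k ∧ setBase S X = e}

/-- Distance from `u` to `v` in the digraph `A`. -/
noncomputable def ddist {n : ℕ} (A : Fin n → Fin n → Prop) (u v : Fin n) : ℕ :=
  sInf {l | HasWalk A u v l}

/-- Diameter of the digraph `A`. -/
noncomputable def diam {n : ℕ} (A : Fin n → Fin n → Prop) : ℕ :=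
  sSup {d | ∃ u v : Fin n, ddist A u v = d}

/-- `f` is the vertex sequence of a cycle of length `p` in `A`: a closed walk of
length `p` whose first `p` vertices are pairwise distinct. -/
def IsCycleSeq {n : ℕ} (A : Fin n → Fin n → Prop) (f : ℕ → Fin n) (p : ℕ) : Prop :=
  0 < p ∧ f p = f 0 ∧ (∀ i < p, A (f i) (f (i + 1))) ∧
    ∀ i < p, ∀ j < p, f i = f j → i = j

/-- The digraph `D₁` on `{1,…,n}` (vertex `i` is index `i-1`): the Hamiltonian cycle
`1→2→⋯→n→1` together with the extra arc `(n-1)→1`. -/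
def D1 (n : ℕ) : Fin n → Fin n → Prop := fun u v =>
  (v.val = u.val + 1) ∨ (u.val = n - 1 ∧ v.val = 0) ∨ (u.val = n - 2 ∧ v.val = 0)

/-- The digraph `D₂`: `D₁` together with the extra arc `(n)→2`. -/
def D2 (n : ℕ) : Fin n → Fin n → Prop := fun u v =>
  D1 n u v ∨ (u.val = n - 1 ∧ v.val = 1)

/-- Isomorphism of digraphs on the same vertex set `Fin n`. -/
def DigraphIso {n : ℕ} (A B : Fin n → Fin n → Prop) : Prop :=
  ∃ e : Fin n ≃ Fin n, ∀ u v, A u v ↔ B (e u) (e v)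

section UBAux

variable {n : ℕ}

lemma hasWalk_iff {A : Fin n → Fin n → Prop} {u v : Fin n} {l : ℕ} :
    HasWalk A u v l ↔ ∃ f, IsWalkSeq A f u v l := Iff.rfl

def concatSeq (f g : ℕ → Fin n) (l1 : ℕ) : ℕ → Fin n :=
  fun i => if i < l1 then f i else g (i - l1)

lemma concatSeq_apply (f g : ℕ → Fin n) (l1 i : ℕ) :
    concatSeq f g l1 i = if i < l1 then f i else g (i - l1) := rfl

/-- concatenation of walk sequences, with sign multiplicativity -/
lemma walk_concat {A : Fin n → Fin n → Prop} {f g : ℕ → Fin n} {u v w : Fin n} {l1 l2 : ℕ}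
    (hf : IsWalkSeq A f u v l1) (hg : IsWalkSeq A g v w l2) :
    ∃ h, IsWalkSeq A h u w (l1 + l2) ∧
      ∀ S : Fin n → Fin n → ℤ, walkSign S h (l1 + l2) = walkSign S f l1 * walkSign S g l2 := by
  obtain ⟨hf0, hfl, hfa⟩ := hf
  obtain ⟨hg0, hgl, hga⟩ := hg
  have hle : ∀ i, i ≤ l1 → concatSeq f g l1 i = f i := by
    intro i h2
    by_cases h1 : i < l1
    · rw [concatSeq_apply, if_pos h1]
    · have : i = l1 := by omega
      subst this
      rw [concatSeq_apply, if_neg h1, Nat.sub_self, hg0, hfl]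
  have harc : ∀ i < l1 + l2, A (concatSeq f g l1 i) (concatSeq f g l1 (i+1)) := by
    intro i hi
    by_cases h : i < l1
    · rw [hle i (by omega), hle (i+1) (by omega)]
      exact hfa i h
    · rw [concatSeq_apply, if_neg h, concatSeq_apply, if_neg (by omega)]
      have h1 : i + 1 - l1 = (i - l1) + 1 := by omega
      rw [h1]
      exact hga (i - l1) (by omega)
  refine ⟨concatSeq f g l1, ⟨?_, ?_, harc⟩, ?_⟩
  · rw [hle 0 (by omega)]; exact hf0
  · rw [concatSeq_apply, if_neg (by omega)]
    simpa using hgl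
  · intro S
    unfold walkSign
    rw [Finset.prod_range_add]
    congr 1
    · apply Finset.prod_congr rfl
      intro i hi
      simp only [Finset.mem_range] at hi
      rw [hle i (by omega), hle (i+1) (by omega)]
    · apply Finset.prod_congr rfl
      intro i hi
      simp only [Finset.mem_range] at hi
      rw [concatSeq_apply, if_neg (by omega), concatSeq_apply, if_neg (by omega)]
      congr 2 <;> omega

lemma walkSign_ne_zero {S : Fin n → Fin n → ℤ} {f : ℕ → Fin n} {u v : Fin n} {l : ℕ}
    (hf : IsWalkSeq (Underlying S) f u v l) : walkSign S f l ≠ 0 := by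
  unfold walkSign
  rw [Finset.prod_ne_zero_iff]
  intro i hi
  exact hf.2.2 i (Finset.mem_range.mp hi)

end UBAux
section UBAux2

variable {n : ℕ}
open Fin.NatCast

lemma val_one_of_two_le [NeZero n] (hn : 2 ≤ n) : (1 : Fin n).val = 1 := by
  rw [Fin.val_one']
  exact Nat.mod_eq_of_lt (by omega)

lemma val_add_one_mod [NeZero n] (hn : 2 ≤ n) (a : Fin n) :
    (a + 1).val = (a.val + 1) % n := by
  rw [Fin.val_add, val_one_of_two_le hn]

lemma D2_ham_arc [NeZero n] (hn : 2 ≤ n) (a : Fin n) : D2 n a (a + 1) := by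
  have hv := val_add_one_mod hn a
  by_cases h : a.val = n - 1
  · have : (a + 1).val = 0 := by
      rw [hv, h]
      have : n - 1 + 1 = n := by omega
      rw [this, Nat.mod_self]
    exact Or.inl (Or.inr (Or.inl ⟨h, this⟩))
  · have ha : a.val < n - 1 := by have := a.isLt; omega
    have : (a + 1).val = a.val + 1 := by
      rw [hv]; exact Nat.mod_eq_of_lt (by omega)
    exact Or.inl (Or.inl this)

lemma ham_walk [NeZero n] (hn : 2 ≤ n) (x : Fin n) (l : ℕ) :
    IsWalkSeq (D2 n) (fun i => x + (i : Fin n)) x (x + (l : Fin n)) l := by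
  refine ⟨by simp, rfl, ?_⟩
  intro i _
  have : ((i + 1 : ℕ) : Fin n) = (i : Fin n) + 1 := by push_cast; ring
  simp only [this, ← add_assoc]
  exact D2_ham_arc hn (x + (i : Fin n))

lemma ham_to [NeZero n] (hn : 2 ≤ n) (x v : Fin n) :
    IsWalkSeq (D2 n) (fun i => x + (i : Fin n)) x v ((v - x).val) := by
  have h := ham_walk hn x ((v - x).val)
  rwa [Fin.cast_val_eq_self (v - x), add_comm, sub_add_cancel] at h

lemma loop_n [NeZero n] (hn : 2 ≤ n) (x : Fin n) :
    IsWalkSeq (D2 n) (fun i => x + (i : Fin n)) x x n := by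
  have h := ham_walk hn x n
  rwa [Fin.natCast_self, add_zero] at h

lemma loop_n1 [NeZero n] (hn : 2 ≤ n) (w : Fin n) (hw : w.val = n - 2) :
    IsWalkSeq (D2 n) (fun i => if i = 0 then w else ((i - 1 : ℕ) : Fin n)) w w (n - 1) := by
  refine ⟨by simp, ?_, ?_⟩
  · beta_reduce
    rw [if_neg (by omega)]
    apply Fin.ext
    rw [Fin.val_cast_of_lt (by omega : n - 1 - 1 < n), hw]
    omega
  · intro i hi
    beta_reduce
    by_cases h : i = 0
    · subst h
      rw [if_pos rfl, if_neg (by omega)]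
      refine Or.inl (Or.inr (Or.inr ⟨hw, ?_⟩))
      simp
    · rw [if_neg h, if_neg (by omega)]
      refine Or.inl (Or.inl ?_)
      rw [Fin.val_cast_of_lt (by omega : i - 1 < n), Fin.val_cast_of_lt (by omega : i + 1 - 1 < n)]
      omega

lemma hasWalk_trans {A : Fin n → Fin n → Prop} {u v w : Fin n} {l1 l2 : ℕ}
    (h1 : HasWalk A u v l1) (h2 : HasWalk A v w l2) : HasWalk A u w (l1 + l2) := by
  obtain ⟨f, hf⟩ := h1
  obtain ⟨g, hg⟩ := h2
  obtain ⟨h, hh, -⟩ := walk_concat hf hg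
  exact ⟨h, hh⟩

lemma walk_repeat {A : Fin n → Fin n → Prop} {x : Fin n} {p : ℕ}
    (h : HasWalk A x x p) (m : ℕ) : HasWalk A x x (m * p) := by
  induction m with
  | zero => exact ⟨fun _ => x, rfl, rfl, fun i hi => absurd hi (by omega)⟩
  | succ m ih =>
      have := hasWalk_trans ih h
      rwa [show m * p + p = (m + 1) * p by ring] at this

end UBAux2
section UBAux3

lemma good_rep {n k c : ℕ} (hn : 2 ≤ n) (hk1 : 1 ≤ k) (hkn : k ≤ n)
    (hc : (k - 1 ≤ c ∧ c ≤ n - 1) ∨ (n + k - 1 ≤ c ∧ c ≤ 2 * n - 2)) :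
    ∃ s t, c + s * (n - 1) + t * n = (n - k + 1) * (n - 1) := by
  rcases hc with ⟨h1, h2⟩ | ⟨h1, h2⟩
  · refine ⟨c + 1 - k, n - 1 - c, ?_⟩
    zify [show k ≤ c + 1 by omega, show c ≤ n - 1 by omega, show 1 ≤ n by omega,
      show k ≤ n by omega]
    ring
  · refine ⟨c + 1 - k - n, 2 * n - 2 - c, ?_⟩
    zify [show k ≤ c + 1 by omega, show n ≤ c + 1 - k by omega, show c ≤ 2 * n - 2 by omega,
      show 2 ≤ 2 * n by omega, show 1 ≤ n by omega, show k ≤ n by omega]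
    ring

lemma exists_good_e {n k a : ℕ} (hn : 2 ≤ n) (hk1 : 1 ≤ k) (hkn : k ≤ n) (ha : a ≤ n - 1)
    (X : Finset ℕ) (hX : X ⊆ Finset.range n) (hcard : X.card = k) :
    ∃ e ∈ X, ∃ s t, e + a + s * (n - 1) + t * n = (n - k + 1) * (n - 1) := by
  set E : Finset ℕ := if a ≤ k - 1 then Finset.Icc (k - 1 - a) (n - 1 - a)
    else Finset.Icc 0 (n - 1 - a) ∪ Finset.Icc (n + k - 1 - a) (n - 1) with hE
  have hEgood : ∀ e ∈ E, (k - 1 ≤ e + a ∧ e + a ≤ n - 1) ∨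
      (n + k - 1 ≤ e + a ∧ e + a ≤ 2 * n - 2) := by
    intro e he
    rw [hE] at he
    by_cases hak : a ≤ k - 1
    · rw [if_pos hak, Finset.mem_Icc] at he
      left; omega
    · rw [if_neg hak, Finset.mem_union, Finset.mem_Icc, Finset.mem_Icc] at he
      rcases he with h | h
      · left; omega
      · right; omega
  have hEsub : E ⊆ Finset.range n := by
    intro e he
    rw [hE] at he
    rw [Finset.mem_range]
    by_cases hak : a ≤ k - 1
    · rw [if_pos hak, Finset.mem_Icc] at he; omega
    · rw [if_neg hak, Finset.mem_union, Finset.mem_Icc, Finset.mem_Icc] at he; omega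
  have hEcard : n - k + 1 ≤ E.card := by
    rw [hE]
    by_cases hak : a ≤ k - 1
    · rw [if_pos hak, Nat.card_Icc]; omega
    · rw [if_neg hak]
      have hdisj : Disjoint (Finset.Icc 0 (n - 1 - a)) (Finset.Icc (n + k - 1 - a) (n - 1)) := by
        rw [Finset.disjoint_left]
        intro e h1 h2
        rw [Finset.mem_Icc] at h1 h2
        omega
      rw [Finset.card_union_of_disjoint hdisj, Nat.card_Icc, Nat.card_Icc]
      omega
  have hmeet : ∃ e ∈ X, e ∈ E := by
    by_contra hcon
    push_neg at hcon
    have hdisj : Disjoint X E := Finset.disjoint_left.mpr hcon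
    have h1 : (X ∪ E).card = X.card + E.card := Finset.card_union_of_disjoint hdisj
    have h2 : (X ∪ E) ⊆ Finset.range n := Finset.union_subset hX hEsub
    have h3 := Finset.card_le_card h2
    rw [Finset.card_range] at h3
    omega
  obtain ⟨e, heX, heE⟩ := hmeet
  exact ⟨e, heX, good_rep hn hk1 hkn (hEgood e heE)⟩

end UBAux3
section UBAux4

variable {n : ℕ}

lemma cycle_sign_cases [NeZero n] (hn : 2 ≤ n) (S : Fin n → Fin n → ℤ)
    {f : ℕ → Fin n} (hf : IsCycleSeq (D2 n) f (n - 1)) :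
    walkSign S f (n - 1) =
      ∏ v ∈ Finset.univ.erase (⟨n - 1, by omega⟩ : Fin n),
        S v (if v.val = n - 2 then (⟨0, by omega⟩ : Fin n) else v + 1) ∨
    walkSign S f (n - 1) =
      ∏ v ∈ Finset.univ.erase (⟨0, by omega⟩ : Fin n),
        S v (if v.val = n - 1 then (⟨1, by omega⟩ : Fin n) else v + 1) := by
  obtain ⟨hp0, hcl, harc, hinj⟩ := hf
  have h0n : 0 < n := by omega
  have h1n : n - 1 < n := by omega
  set p := n - 1 with hp
  have hinjOn : ∀ i ∈ Finset.range p, ∀ j ∈ Finset.range p, f i = f j → i = j := by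
    intro i hi j hj h
    rw [Finset.mem_range] at hi hj
    exact hinj i hi j hj h
  set V := (Finset.range p).image f with hV
  have hVcard : V.card = p := by
    rw [hV, Finset.card_image_of_injOn, Finset.card_range]
    intro i hi j hj h
    simp only [Finset.coe_range, Set.mem_Iio] at hi hj
    exact hinj i hi j hj h
  have hfV : ∀ i ≤ p, f i ∈ V := by
    intro i hi
    by_cases h : i = p
    · subst h; rw [hcl]; exact Finset.mem_image_of_mem f (Finset.mem_range.mpr (by omega))
    · exact Finset.mem_image_of_mem f (Finset.mem_range.mpr (by omega))
  obtain ⟨m, hm⟩ : ∃ m : Fin n, m ∉ V := by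
    by_contra h
    push_neg at h
    have hs : (Finset.univ : Finset (Fin n)) ⊆ V := fun x _ => h x
    have := Finset.card_le_card hs
    rw [hVcard, Finset.card_univ, Fintype.card_fin] at this
    omega
  have hmem_iff : ∀ x : Fin n, x ∈ V ↔ x ≠ m := by
    have hsub : V ⊆ Finset.univ.erase m := fun x hx =>
      Finset.mem_erase.mpr ⟨fun h => hm (h ▸ hx), Finset.mem_univ x⟩
    have hcard : (Finset.univ.erase m).card ≤ V.card := by
      rw [Finset.card_erase_of_mem (Finset.mem_univ m), Finset.card_univ, Fintype.card_fin,
        hVcard]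
    have heq := Finset.eq_of_subset_of_card_le hsub hcard
    intro x
    rw [heq, Finset.mem_erase]
    simp
  have hmval : m.val = 0 ∨ m.val = n - 1 := by
    by_contra hcon
    push_neg at hcon
    have hm2 : 1 ≤ m.val ∧ m.val ≤ n - 2 := by
      have := m.isLt; omega
    set u : Fin n := ⟨m.val - 1, by omega⟩ with hu
    have huval : u.val = m.val - 1 := rfl
    have huV : u ∈ V := (hmem_iff u).mpr (by
      intro h
      rw [Fin.ext_iff, huval] at h
      omega)
    obtain ⟨i, hi, hfi⟩ := Finset.mem_image.mp huV
    rw [Finset.mem_range] at hi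
    have harc' := harc i hi
    have hnext : f (i + 1) ∈ V := hfV (i + 1) (by omega)
    rw [hfi] at harc'
    rcases harc' with (hc | ⟨hc1, hc2⟩ | ⟨hc1, hc2⟩) | ⟨hc1, hc2⟩
    · have hfm : f (i + 1) = m := Fin.ext (by rw [hc, huval]; omega)
      exact hm (hfm ▸ hnext)
    · rw [huval] at hc1; omega
    · rw [huval] at hc1; omega
    · rw [huval] at hc1; omega
  rcases hmval with hm0 | hmn1
  · -- missing vertex 0 : second case
    right
    have hmeq : m = (⟨0, h0n⟩ : Fin n) := Fin.ext hm0
    subst hmeq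
    have hVeq : V = Finset.univ.erase (⟨0, by omega⟩ : Fin n) := by
      ext x
      rw [hmem_iff, Finset.mem_erase]
      simp
    have hforce : ∀ i < p, f (i + 1) =
        (if (f i).val = n - 1 then (⟨1, by omega⟩ : Fin n) else f i + 1) := by
      intro i hi
      have hu := (hmem_iff (f i)).mp (hfV i (by omega))
      have hv := (hmem_iff (f (i + 1))).mp (hfV (i + 1) (by omega))
      have hvval : (f (i + 1)).val ≠ 0 := fun h => hv (Fin.ext (by rw [h, hm0]))
      rcases harc i hi with (hc | ⟨hc1, hc2⟩ | ⟨hc1, hc2⟩) | ⟨hc1, hc2⟩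
      · have hub : (f i).val ≠ n - 1 := by
          have := (f (i + 1)).isLt; omega
        rw [if_neg hub]
        apply Fin.ext
        rw [hc, val_add_one_mod hn]
        exact (Nat.mod_eq_of_lt (by have := (f (i + 1)).isLt; omega)).symm
      · exact absurd hc2 hvval
      · exact absurd hc2 hvval
      · rw [if_pos hc1]
        exact Fin.ext hc2
    have hstep : ∀ i ∈ Finset.range p, S (f i) (f (i + 1)) =
        (fun v : Fin n => S v (if v.val = n - 1 then (⟨1, by omega⟩ : Fin n) else v + 1)) (f i) := by
      intro i hi
      rw [Finset.mem_range] at hi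
      simp only
      rw [hforce i hi]
    calc walkSign S f p
        = ∏ i ∈ Finset.range p,
            (fun v : Fin n => S v (if v.val = n - 1 then (⟨1, by omega⟩ : Fin n) else v + 1)) (f i) :=
          Finset.prod_congr rfl hstep
      _ = ∏ v ∈ V,
            (fun v : Fin n => S v (if v.val = n - 1 then (⟨1, by omega⟩ : Fin n) else v + 1)) v :=
          (Finset.prod_image (f := fun v : Fin n =>
            S v (if v.val = n - 1 then (⟨1, by omega⟩ : Fin n) else v + 1)) hinjOn).symm
      _ = _ := by rw [hVeq]
  · -- missing vertex n-1 : first case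
    left
    have hmeq : m = (⟨n - 1, h1n⟩ : Fin n) := Fin.ext hmn1
    subst hmeq
    have hVeq : V = Finset.univ.erase (⟨n - 1, by omega⟩ : Fin n) := by
      ext x
      rw [hmem_iff, Finset.mem_erase]
      simp
    have hforce : ∀ i < p, f (i + 1) =
        (if (f i).val = n - 2 then (⟨0, by omega⟩ : Fin n) else f i + 1) := by
      intro i hi
      have hu := (hmem_iff (f i)).mp (hfV i (by omega))
      have hv := (hmem_iff (f (i + 1))).mp (hfV (i + 1) (by omega))
      have huval : (f i).val ≠ n - 1 := fun h => hu (Fin.ext (by rw [h, hmn1]))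
      have hvval : (f (i + 1)).val ≠ n - 1 := fun h => hv (Fin.ext (by rw [h, hmn1]))
      rcases harc i hi with (hc | ⟨hc1, hc2⟩ | ⟨hc1, hc2⟩) | ⟨hc1, hc2⟩
      · rw [if_neg (by intro h; rw [h] at hc; omega)]
        apply Fin.ext
        rw [hc, val_add_one_mod hn]
        have hub : (f i).val + 1 < n := by have := (f i).isLt; omega
        exact (Nat.mod_eq_of_lt hub).symm
      · exact absurd hc1 huval
      · rw [if_pos hc1]
        exact Fin.ext hc2
      · exact absurd hc1 huval
    have hstep : ∀ i ∈ Finset.range p, S (f i) (f (i + 1)) =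
        (fun v : Fin n => S v (if v.val = n - 2 then (⟨0, by omega⟩ : Fin n) else v + 1)) (f i) := by
      intro i hi
      rw [Finset.mem_range] at hi
      simp only
      rw [hforce i hi]
    calc walkSign S f p
        = ∏ i ∈ Finset.range p,
            (fun v : Fin n => S v (if v.val = n - 2 then (⟨0, by omega⟩ : Fin n) else v + 1)) (f i) :=
          Finset.prod_congr rfl hstep
      _ = ∏ v ∈ V,
            (fun v : Fin n => S v (if v.val = n - 2 then (⟨0, by omega⟩ : Fin n) else v + 1)) v :=
          (Finset.prod_image (f := fun v : Fin n =>
            S v (if v.val = n - 2 then (⟨0, by omega⟩ : Fin n) else v + 1)) hinjOn).symm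
      _ = _ := by rw [hVeq]

end UBAux4
section UBAux5

variable {n : ℕ}

lemma two_paths_sign_ne [NeZero n] (hn : 2 ≤ n) (S : Fin n → Fin n → ℤ)
    (hund : ∀ u v, Underlying S u v ↔ D2 n u v)
    (hdiff : ∃ f g : ℕ → Fin n, IsCycleSeq (D2 n) f (n - 1) ∧ IsCycleSeq (D2 n) g (n - 1) ∧
      walkSign S f (n - 1) ≠ walkSign S g (n - 1)) :
    S ⟨n - 2, by omega⟩ ⟨0, by omega⟩ * S ⟨0, by omega⟩ ⟨1, by omega⟩ ≠
      S ⟨n - 2, by omega⟩ ⟨n - 1, by omega⟩ * S ⟨n - 1, by omega⟩ ⟨1, by omega⟩ := by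
  have h0n : 0 < n := by omega
  have h1n : 1 < n := by omega
  have h2n : n - 2 < n := by omega
  have hn1 : n - 1 < n := by omega
  obtain ⟨f, g, hf, hg, hne⟩ := hdiff
  have hP : (∏ v ∈ Finset.univ.erase (⟨n - 1, by omega⟩ : Fin n),
        S v (if v.val = n - 2 then (⟨0, by omega⟩ : Fin n) else v + 1)) ≠
      (∏ v ∈ Finset.univ.erase (⟨0, by omega⟩ : Fin n),
        S v (if v.val = n - 1 then (⟨1, by omega⟩ : Fin n) else v + 1)) := by
    rcases cycle_sign_cases hn S hf with h1 | h1 <;>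
      rcases cycle_sign_cases hn S hg with h2 | h2
    · exact absurd (h1.trans h2.symm) hne
    · rw [← h1, ← h2]; exact hne
    · rw [← h1, ← h2]; exact fun h => hne h.symm
    · exact absurd (h1.trans h2.symm) hne
  rcases eq_or_lt_of_le hn with h2 | h3
  · -- n = 2
    subst h2
    have he1 : (Finset.univ.erase (⟨2 - 1, by omega⟩ : Fin 2)) = {(⟨0, by omega⟩ : Fin 2)} := by
      ext x; fin_cases x <;> simp [Fin.ext_iff]
    have he2 : (Finset.univ.erase (⟨0, by omega⟩ : Fin 2)) = {(⟨2 - 1, by omega⟩ : Fin 2)} := by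
      ext x; fin_cases x <;> simp [Fin.ext_iff]
    rw [he1, he2, Finset.prod_singleton, Finset.prod_singleton] at hP
    norm_num at hP
    have hS01 : S 0 1 ≠ 0 := (hund 0 1).mpr (Or.inl (Or.inl rfl))
    intro heq
    apply hP
    norm_num at heq
    rw [mul_comm (S 0 1)] at heq
    exact mul_right_cancel₀ hS01 heq
  · -- n ≥ 3
    set a : Fin n := ⟨0, h0n⟩ with ha
    set o : Fin n := ⟨1, h1n⟩ with ho
    set w : Fin n := ⟨n - 2, h2n⟩ with hw
    set z : Fin n := ⟨n - 1, hn1⟩ with hz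
    have haw : a ≠ w := by simp only [ha, hw, ne_eq, Fin.mk.injEq]; omega
    have haz : a ≠ z := by simp only [ha, hz, ne_eq, Fin.mk.injEq]; omega
    have hwz : w ≠ z := by simp only [hw, hz, ne_eq, Fin.mk.injEq]; omega
    set E : Finset (Fin n) := ((Finset.univ.erase z).erase w).erase a with hE
    have hmemE : ∀ v : Fin n, v ∈ E ↔ v ≠ a ∧ v ≠ w ∧ v ≠ z := by
      intro v
      simp [hE, Finset.mem_erase, and_assoc]
    have hwa1 : (w + 1) = z := by
      apply Fin.ext
      rw [val_add_one_mod hn]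
      show (n - 2 + 1) % n = n - 1
      rw [Nat.mod_eq_of_lt (by omega)]
      omega
    have hao1 : (a + 1) = o := by
      apply Fin.ext
      rw [val_add_one_mod hn]
      show (0 + 1) % n = 1
      rw [Nat.mod_eq_of_lt (by omega)]
    have hQne : (∏ v ∈ E, S v (v + 1)) ≠ 0 := by
      rw [Finset.prod_ne_zero_iff]
      intro v hv
      rw [hmemE] at hv
      have hv1 : v.val ≤ n - 3 := by
        have h1 := v.isLt
        have h2 : v.val ≠ n - 2 := fun h => hv.2.1 (Fin.ext h)
        have h3 : v.val ≠ n - 1 := fun h => hv.2.2 (Fin.ext h)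
        omega
      refine (hund _ _).mpr (Or.inl (Or.inl ?_))
      rw [val_add_one_mod hn]
      exact Nat.mod_eq_of_lt (by omega)
    have hsplit1 : (Finset.univ.erase (⟨n - 1, by omega⟩ : Fin n)) = insert w (insert a E) := by
      rw [hE]
      rw [Finset.insert_erase (by
        rw [Finset.mem_erase, Finset.mem_erase]
        exact ⟨haw, haz, Finset.mem_univ a⟩)]
      rw [Finset.insert_erase (by
        rw [Finset.mem_erase]
        exact ⟨hwz, Finset.mem_univ w⟩)]
    have hsplit2 : (Finset.univ.erase (⟨0, by omega⟩ : Fin n)) = insert w (insert z E) := by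
      have hE2 : E = ((Finset.univ.erase a).erase w).erase z := by
        ext v
        rw [hmemE]
        simp only [Finset.mem_erase, Finset.mem_univ, and_true]
        tauto
      rw [hE2]
      rw [Finset.insert_erase (by
        rw [Finset.mem_erase, Finset.mem_erase]
        exact ⟨fun h => hwz h.symm, fun h => haz h.symm, Finset.mem_univ z⟩)]
      rw [Finset.insert_erase (by
        rw [Finset.mem_erase]
        exact ⟨fun h => haw h.symm, Finset.mem_univ w⟩)]
    have haval : a.val = 0 := rfl
    have hoval : o.val = 1 := rfl
    have hwval : w.val = n - 2 := rfl
    have hzval : z.val = n - 1 := rfl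
    have hprod1 : (∏ v ∈ Finset.univ.erase (⟨n - 1, by omega⟩ : Fin n),
        S v (if v.val = n - 2 then (⟨0, by omega⟩ : Fin n) else v + 1)) =
        S w a * (S a o * ∏ v ∈ E, S v (v + 1)) := by
      rw [hsplit1,
        Finset.prod_insert (by
          simp only [Finset.mem_insert, hmemE, not_or]
          exact ⟨fun h => haw h.symm, fun h => h.2.1 rfl⟩),
        Finset.prod_insert (fun h => ((hmemE a).mp h).1 rfl)]
      congr 1
      · rw [if_pos hwval]
      · congr 1
        · rw [if_neg (by rw [haval]; omega), hao1]
        · refine Finset.prod_congr rfl (fun v hv => ?_)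
          rw [if_neg (fun h => ((hmemE v).mp hv).2.1 (Fin.ext (h.trans hwval.symm)))]
    have hprod2 : (∏ v ∈ Finset.univ.erase (⟨0, by omega⟩ : Fin n),
        S v (if v.val = n - 1 then (⟨1, by omega⟩ : Fin n) else v + 1)) =
        S w z * (S z o * ∏ v ∈ E, S v (v + 1)) := by
      rw [hsplit2,
        Finset.prod_insert (by
          simp only [Finset.mem_insert, hmemE, not_or]
          exact ⟨hwz, fun h => h.2.1 rfl⟩),
        Finset.prod_insert (fun h => ((hmemE z).mp h).2.2 rfl)]
      congr 1
      · rw [if_neg (by rw [hwval]; omega), hwa1]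
      · congr 1
        · rw [if_pos hzval]
        · refine Finset.prod_congr rfl (fun v hv => ?_)
          rw [if_neg (fun h => ((hmemE v).mp hv).2.2 (Fin.ext (h.trans hzval.symm)))]
    intro heq
    apply hP
    rw [hprod1, hprod2]
    have heq' : S w a * S a o = S w z * S z o := heq
    rw [← mul_assoc, ← mul_assoc, heq']

end UBAux5
section UBAux6

variable {n : ℕ}
open Fin.NatCast

lemma walkSeq_transfer {S : Fin n → Fin n → ℤ} (hund : ∀ u v, Underlying S u v ↔ D2 n u v)
    {f : ℕ → Fin n} {u v : Fin n} {l : ℕ} (h : IsWalkSeq (D2 n) f u v l) :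
    IsWalkSeq (Underlying S) f u v l :=
  ⟨h.1, h.2.1, fun i hi => (hund _ _).mpr (h.2.2 i hi)⟩

lemma key_sssd [NeZero n] (hn : 2 ≤ n) {k : ℕ} (hk1 : 1 ≤ k) (hkn : k ≤ n)
    (S : Fin n → Fin n → ℤ) (hund : ∀ u v, Underlying S u v ↔ D2 n u v)
    (hsign : S ⟨n - 2, by omega⟩ ⟨0, by omega⟩ * S ⟨0, by omega⟩ ⟨1, by omega⟩ ≠
      S ⟨n - 2, by omega⟩ ⟨n - 1, by omega⟩ * S ⟨n - 1, by omega⟩ ⟨1, by omega⟩)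
    (X : Finset (Fin n)) (hX : X.card = k) (v : Fin n) :
    ∃ x ∈ X, HasSSSD S x v ((n - k + 1) * (n - 1) + 2) := by
  have h0n : 0 < n := by omega
  have h1n : 1 < n := by omega
  have h2n : n - 2 < n := by omega
  have hn1 : n - 1 < n := by omega
  set w : Fin n := ⟨n - 2, h2n⟩ with hwdef
  set a0 : Fin n := ⟨0, h0n⟩ with ha0def
  set o : Fin n := ⟨1, h1n⟩ with hodef
  set z : Fin n := ⟨n - 1, hn1⟩ with hzdef
  set a : ℕ := (v - o).val with hadef
  have ha : a ≤ n - 1 := by have := (v - o).isLt; omega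
  set Xe := X.image (fun x : Fin n => (w - x).val) with hXe
  have hXecard : Xe.card = k := by
    rw [hXe, Finset.card_image_of_injOn, hX]
    intro x _ y _ hxy
    have h1 : w - x = w - y := Fin.ext hxy
    exact sub_right_injective h1
  have hXesub : Xe ⊆ Finset.range n := by
    intro e he
    rw [Finset.mem_range]
    rw [hXe] at he
    obtain ⟨x, -, rfl⟩ := Finset.mem_image.mp he
    exact (w - x).isLt
  obtain ⟨e, heXe, s, t, hrep⟩ := exists_good_e hn hk1 hkn ha Xe hXesub hXecard
  rw [hXe] at heXe
  obtain ⟨x, hxX, hex⟩ := Finset.mem_image.mp heXe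
  refine ⟨x, hxX, ?_⟩
  -- component walks, over Underlying S
  have hA : IsWalkSeq (Underlying S) (fun i => x + (i : Fin n)) x w e := by
    have h := walkSeq_transfer hund (ham_to hn x w)
    rwa [hex] at h
  have hloop : HasWalk (Underlying S) w w (s * (n - 1) + t * n) := by
    refine hasWalk_trans (walk_repeat ⟨_, walkSeq_transfer hund (loop_n1 hn w rfl)⟩ s)
      (walk_repeat ⟨_, walkSeq_transfer hund (loop_n hn w)⟩ t)
  have hEnd : IsWalkSeq (Underlying S) (fun i => o + (i : Fin n)) o v a :=
    walkSeq_transfer hund (ham_to hn o v)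
  set m1 : ℕ → Fin n := fun i => if i = 0 then w else if i = 1 then a0 else o with hm1def
  set m2 : ℕ → Fin n := fun i => if i = 0 then w else if i = 1 then z else o with hm2def
  have hm1 : IsWalkSeq (Underlying S) m1 w o 2 := by
    refine ⟨rfl, rfl, ?_⟩
    intro i hi
    interval_cases i
    · exact (hund _ _).mpr (Or.inl (Or.inr (Or.inr ⟨rfl, rfl⟩)))
    · exact (hund _ _).mpr (Or.inl (Or.inl rfl))
  have hm2 : IsWalkSeq (Underlying S) m2 w o 2 := by
    refine ⟨rfl, rfl, ?_⟩
    intro i hi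
    interval_cases i
    · refine (hund _ _).mpr (Or.inl (Or.inl ?_))
      show n - 1 = n - 2 + 1
      omega
    · exact (hund _ _).mpr (Or.inr ⟨rfl, rfl⟩)
  have hM1 : walkSign S m1 2 = S w a0 * S a0 o := by
    unfold walkSign
    rw [Finset.prod_range_succ, Finset.prod_range_succ, Finset.prod_range_zero, one_mul]
    rfl
  have hM2 : walkSign S m2 2 = S w z * S z o := by
    unfold walkSign
    rw [Finset.prod_range_succ, Finset.prod_range_succ, Finset.prod_range_zero, one_mul]
    rfl
  obtain ⟨L, hL⟩ := hloop
  obtain ⟨F, hF, -⟩ := walk_concat hA hL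
  obtain ⟨F1, hF1, hs1⟩ := walk_concat hF hm1
  obtain ⟨G1, hG1, ht1⟩ := walk_concat hF hm2
  obtain ⟨F2, hF2, hs2⟩ := walk_concat hF1 hEnd
  obtain ⟨G2, hG2, ht2⟩ := walk_concat hG1 hEnd
  have hlen : e + (s * (n - 1) + t * n) + 2 + a = (n - k + 1) * (n - 1) + 2 := by
    linarith
  rw [hlen] at hF2 hG2
  refine ⟨F2, G2, hF2, hG2, ?_⟩
  have hsF : walkSign S F (e + (s * (n - 1) + t * n)) ≠ 0 := walkSign_ne_zero hF
  have hsE : walkSign S (fun i => o + (i : Fin n)) a ≠ 0 := walkSign_ne_zero hEnd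
  intro hEq
  apply hsign
  have hEq2 : walkSign S F2 (e + (s * (n - 1) + t * n) + 2 + a) =
      walkSign S G2 (e + (s * (n - 1) + t * n) + 2 + a) := by
    rw [hlen]; exact hEq
  rw [hs2 S, ht2 S, hs1 S, ht1 S, hM1, hM2] at hEq2
  have h3 := mul_right_cancel₀ hsE hEq2
  have h4 := mul_left_cancel₀ hsF h3
  exact h4

end UBAux6
/-- Theorem 3.2(1): if the two cycles of length `n-1` of `S₂` have different signs,
then `L(S₂,k) ≤ (n-k+1)(n-1) + 2`. -/
theorem upperBase_D2_diff_signs {n : ℕ} (hn : 2 ≤ n) (k : ℕ) (hk1 : 1 ≤ k) (hkn : k ≤ n)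
    (S : Fin n → Fin n → ℤ) (hsp : SignPattern S)
    (hund : ∀ u v, Underlying S u v ↔ D2 n u v)
    (hprim : Primitive (Underlying S)) (hnp : NonPowerful S)
    (hdiff : ∃ f g : ℕ → Fin n, IsCycleSeq (D2 n) f (n - 1) ∧
      IsCycleSeq (D2 n) g (n - 1) ∧ walkSign S f (n - 1) ≠ walkSign S g (n - 1)) :
    upperBase S k ≤ (n - k + 1) * (n - 1) + 2 := by
  haveI : NeZero n := ⟨by omega⟩
  apply csSup_le'
  rintro b ⟨X, hXcard, rfl⟩
  have hsign := two_paths_sign_ne hn S hund hdiff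
  exact Nat.sInf_le (fun v => key_sssd hn hk1 hkn S hund hsign X hXcard v)
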